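/- Let J ≥ 1 be an integer and P a non-atomic Borel probability measure on C([0,1]) such that P-almost every curve is non-constant. Then the maps x ↦ D_J(x, P) and x ↦ D̄_J(x, P) are continuous on (C([0,1]), ‖·‖_∞). -/

import Mathlib

set_option maxHeartbeats 1000000
set_option synthInstance.maxHeartbeats 1000000

open MeasureTheory Filter Topology
open scoped ENNReal

noncomputable section

abbrev I01 : Set ℝ := Set.Icc 0 1

abbrev CI := C(I01, ℝ)

noncomputable instance : MeasurableSpace CI := borel CI
instance : BorelSpace CI := ⟨rfl⟩

/-- The graph of a continuous function on `[0,1]`, as a subset of `ℝ²`. -/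
def graph (x : CI) : Set (ℝ × ℝ) := Set.range fun t : I01 => ((t : ℝ), x t)

/-- The area (2-dimensional Lebesgue measure) of the convex hull of a set in `ℝ²`. -/
def ach (A : Set (ℝ × ℝ)) : ℝ := (volume (convexHull ℝ A)).toReal

/-- Ratio of the area of the convex hull of the graphs of a batch of curves to the area of
the convex hull once `x` is added (`0/0 = 0` convention, as division by zero is zero). -/
def achRatio {m : ℕ} (xs : Fin m → CI) (x : CI) : ℝ :=
  ach (⋃ i, graph (xs i)) / ach ((⋃ i, graph (xs i)) ∪ graph x)

/-- The ACH depth of degree `J` of `x` w.r.t. `P`. -/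
def ACHDepth (J : ℕ) (P : Measure CI) (x : CI) : ℝ :=
  ∫ xs, achRatio xs x ∂(Measure.pi fun _ : Fin J => P)

/-- The average ACH depth of degree `J`. -/
def avgACHDepth (J : ℕ) (P : Measure CI) (x : CI) : ℝ :=
  (J : ℝ)⁻¹ * ∑ j ∈ Finset.Icc 1 J, ACHDepth j P x

/-- A curve is non-constant. -/
def Nonconstant (x : CI) : Prop := ¬ ∃ c : ℝ, ∀ t, x t = c

/-- The empirical ACH depth (`U`-statistic of degree `J`) based on the first `n` curves. -/
def empDepth (J n : ℕ) (X : ℕ → CI) (x : CI) : ℝ :=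
  (n.choose J : ℝ)⁻¹ * ∑ s ∈ Finset.powersetCard J (Finset.range n),
    ach (⋃ i ∈ s, graph (X i)) / ach ((⋃ i ∈ s, graph (X i)) ∪ graph x)

/-- The average empirical ACH depth. -/
def avgEmpDepth (J n : ℕ) (X : ℕ → CI) (x : CI) : ℝ :=
  (J : ℝ)⁻¹ * ∑ j ∈ Finset.Icc 1 J, empDepth j n X x

/-- The band delimited by a finite family of curves. -/
def band {m : ℕ} (xs : Fin m → CI) : Set (ℝ × ℝ) :=
  {p | ∃ t : I01, p.1 = (t : ℝ) ∧ (⨅ i, xs i t) ≤ p.2 ∧ p.2 ≤ ⨆ i, xs i t}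

/-! ### Auxiliary lemmas -/

open Metric Bornology

lemma graph_isCompact (x : CI) : IsCompact (graph x) :=
  isCompact_range (continuous_subtype_val.prodMk x.continuous)

lemma graphs_isCompact {m : ℕ} (xs : Fin m → CI) : IsCompact (⋃ i, graph (xs i)) :=
  isCompact_iUnion fun i => graph_isCompact (xs i)

lemma graph_subset_cthickening {x y : CI} {δ : ℝ} (h : dist y x ≤ δ) :
    graph y ⊆ cthickening δ (graph x) := by
  rintro _ ⟨t, rfl⟩
  refine mem_cthickening_of_dist_le _ ((t : ℝ), x t) δ _ ⟨t, rfl⟩ ?_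
  rw [Prod.dist_eq]
  simp only [dist_self]
  have hd : dist (y t) (x t) ≤ δ := (ContinuousMap.dist_apply_le_dist t).trans h
  exact max_le (dist_nonneg.trans hd) hd

lemma hull_subset_cthickening {A B : Set (ℝ × ℝ)} {ε : ℝ} (h : B ⊆ cthickening ε A) :
    convexHull ℝ B ⊆ cthickening ε (convexHull ℝ A) := by
  have h1 : Convex ℝ (cthickening ε (convexHull ℝ A)) := (convex_convexHull ℝ A).cthickening ε
  have h2 : B ⊆ cthickening ε (convexHull ℝ A) :=
    h.trans (cthickening_subset_of_subset ε (subset_convexHull ℝ A))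
  exact convexHull_min h2 h1

lemma volume_closure_convex {s : Set (ℝ × ℝ)} (hs : Convex ℝ s) :
    volume (closure s) = volume s := by
  refine le_antisymm ?_ (measure_mono subset_closure)
  calc volume (closure s) ≤ volume (s ∪ frontier s) := by
        refine measure_mono fun p hp => ?_
        by_cases h : p ∈ s
        · exact Or.inl h
        · exact Or.inr ⟨hp, fun h' => h (interior_subset h')⟩
    _ ≤ volume s + volume (frontier s) := measure_union_le _ _
    _ = volume s := by rw [hs.addHaar_frontier volume, add_zero]

lemma volume_hull_lt_top {A : Set (ℝ × ℝ)} (hA : IsBounded A) :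
    volume (convexHull ℝ A) < ⊤ :=
  (isBounded_convexHull.mpr hA).measure_lt_top

lemma tendsto_volume_cthickening_hull {A : Set (ℝ × ℝ)} (hA : IsBounded A) :
    Tendsto (fun δ : ℝ => volume (cthickening δ (convexHull ℝ A))) (𝓝 0)
      (𝓝 (volume (convexHull ℝ A))) := by
  have hb : IsBounded (closure (convexHull ℝ A)) :=
    (isBounded_convexHull.mpr hA).closure
  have h := tendsto_measure_cthickening_of_isClosed (μ := volume)
    (s := closure (convexHull ℝ A)) ⟨1, one_pos, (hb.cthickening.measure_lt_top).ne⟩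
    isClosed_closure
  simpa [cthickening_closure, volume_closure_convex (convex_convexHull ℝ A)] using h

/-- Key separation lemma: if a closed convex set `L` nearly (within `ε`) contains both a ball
`ball p r` and a point `q`, then it contains the homothety of `q` about `p` with ratio
`1 - ε / r`. -/
lemma shrink_mem {L : Set (ℝ × ℝ)} (hLconv : Convex ℝ L) (hLcl : IsClosed L)
    {p q : ℝ × ℝ} {r ε : ℝ} (hr : 0 < r) (hε : 0 ≤ ε) (hεr : ε < r)
    (hball : ∀ v : ℝ × ℝ, ‖v‖ < r → p + v ∈ cthickening ε L)
    (hq : q ∈ cthickening ε L) :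
    p + (1 - ε / r) • (q - p) ∈ L := by
  by_contra hq'
  obtain ⟨f, u, hfu, huf⟩ := geometric_hahn_banach_closed_point hLconv hLcl hq'
  -- every point of the `ε`-thickening of `L` has `f`-value at most `u + ‖f‖ * ε`
  have key : ∀ y : ℝ × ℝ, y ∈ cthickening ε L → f y ≤ u + ‖f‖ * ε := by
    intro y hy
    refine le_of_forall_pos_le_add fun δ hδ => ?_
    have hδ' : (0:ℝ) < δ / (‖f‖ + 1) := div_pos hδ (by positivity)
    have h1 : EMetric.infEdist y L < ENNReal.ofReal (ε + δ / (‖f‖ + 1)) := by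
      refine lt_of_le_of_lt (mem_cthickening_iff.mp hy) ?_
      exact ENNReal.ofReal_lt_ofReal_iff (by positivity) |>.mpr (by linarith)
    obtain ⟨l, hl, hdl⟩ := EMetric.infEdist_lt_iff.mp h1
    have hdist : dist y l < ε + δ / (‖f‖ + 1) := by
      rwa [edist_lt_ofReal] at hdl
    have h2 : f y - f l ≤ ‖f‖ * dist y l := by
      calc f y - f l = f (y - l) := by rw [map_sub]
        _ ≤ |f (y - l)| := le_abs_self _
        _ ≤ ‖f‖ * ‖y - l‖ := f.le_opNorm _
        _ = ‖f‖ * dist y l := by rw [dist_eq_norm]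
    have h3 : ‖f‖ * dist y l ≤ ‖f‖ * (ε + δ / (‖f‖ + 1)) :=
      mul_le_mul_of_nonneg_left hdist.le (norm_nonneg f)
    have h4 : ‖f‖ * (δ / (‖f‖ + 1)) ≤ δ := by
      rw [mul_div_assoc']
      rw [div_le_iff₀ (by positivity)]
      nlinarith [norm_nonneg f]
    have h5 := hfu l hl
    nlinarith [norm_nonneg f]
  set C : ℝ := u + ‖f‖ * ε - f p with hC
  have hfp0 : f p ≤ u + ‖f‖ * ε := by
    have := key p (by simpa using hball 0 (by simpa using hr))
    simpa using this
  have hC0 : 0 ≤ C := by simp [hC]; linarith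
  have habs : ∀ z ∈ ball (0 : ℝ × ℝ) r, ‖f z‖ ≤ C := by
    intro z hz
    rw [mem_ball, dist_zero_right] at hz
    have h1 : f p + f z ≤ u + ‖f‖ * ε := by
      have := key _ (hball z hz)
      rwa [map_add] at this
    have h2 : f p + f (-z) ≤ u + ‖f‖ * ε := by
      have := key _ (hball (-z) (by simpa using hz))
      rwa [map_add] at this
    rw [map_neg] at h2
    rw [Real.norm_eq_abs, abs_le]
    constructor <;> [linarith; linarith]
  have hnorm : ∀ s : ℝ, 0 < s → s < r → ‖f‖ * s ≤ C := by
    intro s hs hsr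
    have hb : ‖f‖ ≤ C / s := by
      refine f.opNorm_bound_of_ball_bound hs C fun z hz => ?_
      exact habs z (lt_of_le_of_lt (mem_closedBall_zero_iff.mp hz) hsr |>.trans_le le_rfl |>
        (fun h' => mem_ball_zero_iff.mpr h'))
    calc ‖f‖ * s ≤ C / s * s := by nlinarith
      _ = C := div_mul_cancel₀ C hs.ne'
  have hnr : ‖f‖ * r ≤ C := by
    by_contra hlt
    push_neg at hlt
    have hfpos : 0 < ‖f‖ := by nlinarith
    have hcd : C / ‖f‖ < r := by rw [div_lt_iff₀ hfpos]; nlinarith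
    have hcd0 : 0 ≤ C / ‖f‖ := div_nonneg hC0 hfpos.le
    have hs := hnorm ((C / ‖f‖ + r) / 2) (by linarith) (by linarith)
    have hcc : ‖f‖ * (C / ‖f‖) = C := mul_div_cancel₀ C hfpos.ne'
    nlinarith
  -- now compute `f` at the homothetic point
  have hval : f (p + (1 - ε / r) • (q - p)) = f p + (1 - ε / r) * (f q - f p) := by
    rw [map_add, f.map_smul, map_sub, smul_eq_mul]
  have hfq : f q ≤ u + ‖f‖ * ε := key q hq
  have hs0 : 0 ≤ ε / r := div_nonneg hε hr.le
  have hs1 : ε / r < 1 := (div_lt_one hr).mpr hεr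
  have hsr : ε / r * r = ε := div_mul_cancel₀ ε hr.ne'
  have hcontra : f (p + (1 - ε / r) • (q - p)) ≤ u := by
    rw [hval]
    have hfpC : f p ≤ u + ‖f‖ * ε - ‖f‖ * r := by simp [hC] at hnr ⊢; linarith
    nlinarith [mul_le_mul_of_nonneg_left hfpC hs0, norm_nonneg f]
  exact absurd (huf.trans_le hcontra) (lt_irrefl u)

/-- The main squeeze lemma: the area of the convex hull is continuous under
two-sided `ε`-thickening approximation. -/
lemma ach_tendsto {ι : Type*} {l : Filter ι} {K : ι → Set (ℝ × ℝ)} {A : Set (ℝ × ℝ)}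
    (hA : IsBounded A) {ε : ι → ℝ} (hε0 : ∀ i, 0 ≤ ε i) (hε : Tendsto ε l (𝓝 0))
    (h1 : ∀ i, K i ⊆ cthickening (ε i) A) (h2 : ∀ i, A ⊆ cthickening (ε i) (K i)) :
    Tendsto (fun i => ach (K i)) l (𝓝 (ach A)) := by
  have hfin : volume (convexHull ℝ A) ≠ ⊤ := (volume_hull_lt_top hA).ne
  -- upper bound
  have hKb : ∀ i, volume (convexHull ℝ (K i)) ≤ volume (cthickening (ε i) (convexHull ℝ A)) :=
    fun i => measure_mono (hull_subset_cthickening (h1 i))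
  have hU : Tendsto (fun i => (volume (cthickening (ε i) (convexHull ℝ A))).toReal) l
      (𝓝 (ach A)) := by
    have := (tendsto_volume_cthickening_hull hA).comp hε
    exact (ENNReal.tendsto_toReal hfin).comp this
  have hupper : ∀ i, ach (K i) ≤ (volume (cthickening (ε i) (convexHull ℝ A))).toReal := by
    intro i
    have hfin' : volume (cthickening (ε i) (convexHull ℝ A)) ≠ ⊤ := by
      have : IsBounded (cthickening (ε i) (convexHull ℝ A)) :=
        (isBounded_convexHull.mpr hA).cthickening
      exact this.measure_lt_top.ne
    exact ENNReal.toReal_le_toReal (ne_top_of_le_ne_top hfin' (hKb i)) hfin' |>.mpr (hKb i)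
  by_cases hvol : volume (convexHull ℝ A) = 0
  · have hach : ach A = 0 := by simp [ach, hvol]
    rw [hach]
    refine squeeze_zero (fun i => ENNReal.toReal_nonneg) hupper ?_
    rw [hach] at hU; exact hU
  -- positive volume case: get an interior ball
  · have hconv := convex_convexHull ℝ A
    have hint : (interior (convexHull ℝ A)).Nonempty := by
      by_contra h
      rcases eq_or_ne (affineSpan ℝ (convexHull ℝ A)) ⊤ with hsp | hsp
      · exact h (hconv.interior_nonempty_iff_affineSpan_eq_top.mpr hsp)
      · exact hvol (measure_mono_null
          (subset_affineSpan ℝ (convexHull ℝ A)) (Measure.addHaar_affineSubspace _ _ hsp))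
    obtain ⟨p, hp⟩ := hint
    obtain ⟨r, hr, hball⟩ := isOpen_iff.mp isOpen_interior p hp
    have hball' : ball p r ⊆ convexHull ℝ A := hball.trans interior_subset
    -- lower bound
    have hlower : ∀ i, ε i < r →
        (1 - ε i / r) ^ 2 * ach A ≤ ach (K i) := by
      intro i hi
      set L : Set (ℝ × ℝ) := closure (convexHull ℝ (K i)) with hL
      have hLconv : Convex ℝ L := (convex_convexHull ℝ (K i)).closure
      have hsub : convexHull ℝ A ⊆ cthickening (ε i) L := by
        rw [hL, cthickening_closure]
        exact hull_subset_cthickening (h2 i)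
      have hshr : ∀ q ∈ convexHull ℝ A, p + (1 - ε i / r) • (q - p) ∈ L := by
        intro q hq
        refine shrink_mem hLconv isClosed_closure hr (hε0 i) hi ?_ (hsub hq)
        intro v hv
        exact hsub (hball' (by simpa [mem_ball, dist_eq_norm] using hv))
      have himg : AffineMap.homothety p (1 - ε i / r) '' convexHull ℝ A ⊆ L := by
        rintro _ ⟨q, hq, rfl⟩
        have := hshr q hq
        simpa [AffineMap.homothety_apply, add_comm] using this
      have hvolL : volume L = volume (convexHull ℝ (K i)) :=
        volume_closure_convex (convex_convexHull ℝ (K i))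
      have hvim : volume (AffineMap.homothety p (1 - ε i / r) '' convexHull ℝ A)
          = ENNReal.ofReal ((1 - ε i / r) ^ 2) * volume (convexHull ℝ A) := by
        rw [Measure.addHaar_image_homothety]
        congr 1
        have h2' : Module.finrank ℝ (ℝ × ℝ) = 2 := by simp
        rw [h2']
        rw [abs_of_nonneg (by positivity)]
      have hineq : ENNReal.ofReal ((1 - ε i / r) ^ 2) * volume (convexHull ℝ A)
          ≤ volume (convexHull ℝ (K i)) := by
        rw [← hvim, ← hvolL]
        exact measure_mono himg
      have hKfin : volume (convexHull ℝ (K i)) ≠ ⊤ :=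
        ne_top_of_le_ne_top ((isBounded_convexHull.mpr hA).cthickening.measure_lt_top.ne)
          (hKb i)
      have := ENNReal.toReal_le_toReal
        (by
          refine ne_top_of_le_ne_top hKfin hineq) hKfin |>.mpr hineq
      rwa [ENNReal.toReal_mul, ENNReal.toReal_ofReal (by positivity)] at this
    -- assemble the squeeze
    have hLtendsto : Tendsto (fun i => (1 - ε i / r) ^ 2 * ach A) l (𝓝 (ach A)) := by
      have h1' : Tendsto (fun i => (1 - ε i / r) ^ 2) l (𝓝 1) := by
        have : Tendsto (fun i => 1 - ε i / r) l (𝓝 1) := by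
          have := (hε.div_const r).const_sub 1
          simpa using this
        simpa using this.pow 2
      simpa using h1'.mul_const (ach A)
    refine tendsto_of_tendsto_of_tendsto_of_le_of_le' hLtendsto hU ?_
      (Eventually.of_forall hupper)
    exact (hε.eventually (eventually_lt_nhds hr)).mono fun i hi => hlower i hi

lemma graphs_subset_cthickening {m : ℕ} {xs ys : Fin m → CI} {δ : ℝ}
    (h : ∀ i, dist (xs i) (ys i) ≤ δ) :
    (⋃ i, graph (xs i)) ⊆ cthickening δ (⋃ i, graph (ys i)) :=
  Set.iUnion_subset fun i => (graph_subset_cthickening (h i)).trans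
    (cthickening_subset_of_subset δ (Set.subset_iUnion (fun j => graph (ys j)) i))

lemma ach_union_cont_right {m : ℕ} (xs : Fin m → CI) :
    Continuous fun x : CI => ach ((⋃ i, graph (xs i)) ∪ graph x) := by
  refine continuous_iff_seqContinuous.mpr ?_
  intro u x hu
  have hA : IsBounded ((⋃ i, graph (xs i)) ∪ graph x) :=
    ((graphs_isCompact xs).union (graph_isCompact x)).isBounded
  have hd : Tendsto (fun n => dist (u n) x) atTop (𝓝 0) :=
    tendsto_iff_dist_tendsto_zero.mp hu
  refine ach_tendsto (ε := fun n => dist (u n) x) hA (fun n => dist_nonneg) hd ?_ ?_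
  · intro n
    refine Set.union_subset
      ((self_subset_cthickening _).trans
        (cthickening_subset_of_subset _ Set.subset_union_left)) ?_
    exact (graph_subset_cthickening le_rfl).trans
      (cthickening_subset_of_subset _ Set.subset_union_right)
  · intro n
    refine Set.union_subset
      ((self_subset_cthickening _).trans
        (cthickening_subset_of_subset _ Set.subset_union_left)) ?_
    exact (graph_subset_cthickening (dist_comm (u n) x ▸ le_rfl)).trans
      (cthickening_subset_of_subset _ Set.subset_union_right)

lemma ach_union_cont_left {m : ℕ} (y : CI) :
    Continuous fun xs : Fin m → CI => ach ((⋃ i, graph (xs i)) ∪ graph y) := by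
  refine continuous_iff_seqContinuous.mpr ?_
  intro u p hu
  have hA : IsBounded ((⋃ i, graph (p i)) ∪ graph y) :=
    ((graphs_isCompact p).union (graph_isCompact y)).isBounded
  have hd : Tendsto (fun n => dist (u n) p) atTop (𝓝 0) :=
    tendsto_iff_dist_tendsto_zero.mp hu
  refine ach_tendsto (ε := fun n => dist (u n) p) hA (fun n => dist_nonneg) hd ?_ ?_
  · intro n
    refine Set.union_subset ?_
      ((self_subset_cthickening _).trans
        (cthickening_subset_of_subset _ Set.subset_union_right))
    exact (graphs_subset_cthickening fun i => dist_le_pi_dist (u n) p i).trans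
      (cthickening_subset_of_subset _ Set.subset_union_left)
  · intro n
    refine Set.union_subset ?_
      ((self_subset_cthickening _).trans
        (cthickening_subset_of_subset _ Set.subset_union_right))
    refine ((graphs_subset_cthickening fun i => ?_).trans
      (cthickening_subset_of_subset _ Set.subset_union_left))
    rw [dist_comm]
    exact dist_le_pi_dist (u n) p i

lemma ach_graphs_cont {m : ℕ} :
    Continuous fun xs : Fin m → CI => ach (⋃ i, graph (xs i)) := by
  refine continuous_iff_seqContinuous.mpr ?_
  intro u p hu
  have hA : IsBounded (⋃ i, graph (p i)) := (graphs_isCompact p).isBounded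
  have hd : Tendsto (fun n => dist (u n) p) atTop (𝓝 0) :=
    tendsto_iff_dist_tendsto_zero.mp hu
  refine ach_tendsto (ε := fun n => dist (u n) p) hA (fun n => dist_nonneg) hd ?_ ?_
  · intro n
    exact graphs_subset_cthickening fun i => dist_le_pi_dist (u n) p i
  · intro n
    refine graphs_subset_cthickening fun i => ?_
    rw [dist_comm]
    exact dist_le_pi_dist (u n) p i

lemma achRatio_nonneg {m : ℕ} (xs : Fin m → CI) (x : CI) : 0 ≤ achRatio xs x :=
  div_nonneg ENNReal.toReal_nonneg ENNReal.toReal_nonneg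

lemma ach_le_ach_union {m : ℕ} (xs : Fin m → CI) (x : CI) :
    ach (⋃ i, graph (xs i)) ≤ ach ((⋃ i, graph (xs i)) ∪ graph x) := by
  have hb : IsBounded ((⋃ i, graph (xs i)) ∪ graph x) :=
    ((graphs_isCompact xs).union (graph_isCompact x)).isBounded
  have hle : volume (convexHull ℝ (⋃ i, graph (xs i)))
      ≤ volume (convexHull ℝ ((⋃ i, graph (xs i)) ∪ graph x)) :=
    measure_mono (convexHull_mono Set.subset_union_left)
  exact ENNReal.toReal_le_toReal (ne_top_of_le_ne_top (volume_hull_lt_top hb).ne hle)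
    (volume_hull_lt_top hb).ne |>.mpr hle

lemma achRatio_le_one {m : ℕ} (xs : Fin m → CI) (x : CI) : achRatio xs x ≤ 1 :=
  div_le_one_of_le₀ (ach_le_ach_union xs x) ENNReal.toReal_nonneg

lemma achRatio_cont {m : ℕ} (xs : Fin m → CI) : Continuous fun x => achRatio xs x := by
  by_cases h : volume (convexHull ℝ (⋃ i, graph (xs i))) = 0
  · have heq : (fun x => achRatio xs x) = fun _ => (0 : ℝ) := by
      funext x
      simp [achRatio, ach, h]
    rw [heq]
    exact continuous_const
  · have hD : Continuous fun x : CI => ach ((⋃ i, graph (xs i)) ∪ graph x) :=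
      ach_union_cont_right xs
    have hpos : ∀ x : CI, 0 < ach ((⋃ i, graph (xs i)) ∪ graph x) := by
      intro x
      have hnum : 0 < ach (⋃ i, graph (xs i)) :=
        ENNReal.toReal_pos h (volume_hull_lt_top (graphs_isCompact xs).isBounded).ne
      exact hnum.trans_le (ach_le_ach_union xs x)
    exact continuous_const.div hD fun x => (hpos x).ne'

lemma achRatio_measurable {m : ℕ} (y : CI) :
    Measurable fun xs : Fin m → CI => achRatio xs y := by
  exact ach_graphs_cont.measurable.div (ach_union_cont_left y).measurable

lemma ACHDepth_continuous (j : ℕ) (P : Measure CI) [IsProbabilityMeasure P] :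
    Continuous fun x : CI => ACHDepth j P x := by
  have hprob : IsProbabilityMeasure (Measure.pi fun _ : Fin j => P) :=
    Measure.pi.instIsProbabilityMeasure _
  refine continuous_iff_seqContinuous.mpr ?_
  intro u x hu
  simp only [Function.comp_def, ACHDepth]
  refine tendsto_integral_of_dominated_convergence (fun _ => (1 : ℝ))
    (fun n => (achRatio_measurable (u n)).aestronglyMeasurable) (integrable_const 1) ?_ ?_
  · intro n
    refine Eventually.of_forall fun xs => ?_
    rw [Real.norm_eq_abs, abs_of_nonneg (achRatio_nonneg xs (u n))]
    exact achRatio_le_one xs (u n)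
  · exact Eventually.of_forall fun xs => ((achRatio_cont xs).tendsto x).comp hu

/-- continuity in `x` of the (average) ACH depth, for a non-atomic probability
measure `P` on `C([0,1])` such that `P`-almost every curve is non-constant. -/
theorem ach_depth_continuous (J : ℕ) (hJ : 1 ≤ J)
    (P : Measure CI) [IsProbabilityMeasure P] [NullSingletonClass P]
    (hP : ∀ᵐ f ∂P, Nonconstant f) :
    Continuous (fun x : CI => ACHDepth J P x) ∧
    Continuous (fun x : CI => avgACHDepth J P x) := by
  constructor
  · exact ACHDepth_continuous J P
  · unfold avgACHDepth
    exact continuous_const.mul (continuous_finset_sum _ fun j _ => ACHDepth_continuous j P)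

end
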